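/- In the one-dimensional Hegselmann–Krause dynamics, for any two agents i and j and any time t, x_i(t+1) = x_j(t+1) if and only if the neighborhoods N_i(t) = {k : |x_i(t) − x_k(t)| ≤ 1} and N_j(t) = {k : |x_j(t) − x_k(t)| ≤ 1} coincide. -/

import Mathlib

open Finset

private lemma avg_lt_avg {n : ℕ} (y : Fin n → ℝ) {S T : Finset (Fin n)}
    (hS : S.Nonempty) (hT : T.Nonempty)
    (h : ∀ a ∈ S, ∀ b ∈ T, y a < y b) :
    (∑ a ∈ S, y a) / S.card < (∑ b ∈ T, y b) / T.card := by
  obtain ⟨b₀, hb₀, hmin⟩ := T.exists_min_image y hT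
  have hSc : (0:ℝ) < S.card := by exact_mod_cast Finset.card_pos.mpr hS
  have hTc : (0:ℝ) < T.card := by exact_mod_cast Finset.card_pos.mpr hT
  have h1 : ∑ a ∈ S, y a < S.card * y b₀ := by
    calc ∑ a ∈ S, y a < ∑ _a ∈ S, y b₀ :=
          Finset.sum_lt_sum_of_nonempty hS (fun a ha => h a ha b₀ hb₀)
      _ = S.card * y b₀ := by rw [Finset.sum_const, nsmul_eq_mul]
  have h2 : (T.card : ℝ) * y b₀ ≤ ∑ b ∈ T, y b := by
    calc (T.card : ℝ) * y b₀ = ∑ _b ∈ T, y b₀ := by rw [Finset.sum_const, nsmul_eq_mul]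
      _ ≤ ∑ b ∈ T, y b := Finset.sum_le_sum (fun b hb => hmin b hb)
  rw [div_lt_div_iff₀ hSc hTc]
  nlinarith [h1, h2, hSc, hTc]

private lemma avg_union_lt_right {n : ℕ} (y : Fin n → ℝ) {P C : Finset (Fin n)}
    (hd : Disjoint P C) (hP : P.Nonempty) (hC : C.Nonempty)
    (h : ∀ a ∈ P, ∀ b ∈ C, y a < y b) :
    (∑ k ∈ P ∪ C, y k) / (P ∪ C).card < (∑ k ∈ C, y k) / C.card := by
  have key := avg_lt_avg y hP hC h
  have hPc : (0:ℝ) < P.card := by exact_mod_cast Finset.card_pos.mpr hP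
  have hCc : (0:ℝ) < C.card := by exact_mod_cast Finset.card_pos.mpr hC
  rw [Finset.sum_union hd, Finset.card_union_of_disjoint hd]
  rw [div_lt_div_iff₀ (by exact_mod_cast hPc) hCc] at key
  push_cast
  rw [div_lt_div_iff₀ (by linarith) hCc]
  nlinarith [key]

private lemma avg_lt_avg_union {n : ℕ} (y : Fin n → ℝ) {C Q : Finset (Fin n)}
    (hd : Disjoint C Q) (hC : C.Nonempty) (hQ : Q.Nonempty)
    (h : ∀ a ∈ C, ∀ b ∈ Q, y a < y b) :
    (∑ k ∈ C, y k) / C.card < (∑ k ∈ C ∪ Q, y k) / (C ∪ Q).card := by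
  have key := avg_lt_avg y hC hQ h
  have hQc : (0:ℝ) < Q.card := by exact_mod_cast Finset.card_pos.mpr hQ
  have hCc : (0:ℝ) < C.card := by exact_mod_cast Finset.card_pos.mpr hC
  rw [Finset.sum_union hd, Finset.card_union_of_disjoint hd]
  rw [div_lt_div_iff₀ hCc (by exact_mod_cast hQc)] at key
  push_cast
  rw [div_lt_div_iff₀ hCc (by linarith)]
  nlinarith [key]

private lemma hk_core {n : ℕ} (y : Fin n → ℝ) (i j : Fin n) (hij : y i ≤ y j)
    (heq : (∑ k ∈ univ.filter (fun k => |y i - y k| ≤ 1), y k) /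
             (univ.filter (fun k => |y i - y k| ≤ 1)).card
         = (∑ k ∈ univ.filter (fun k => |y j - y k| ≤ 1), y k) /
             (univ.filter (fun k => |y j - y k| ≤ 1)).card) :
    univ.filter (fun k => |y i - y k| ≤ 1) = univ.filter (fun k => |y j - y k| ≤ 1) := by
  set A := univ.filter (fun k => |y i - y k| ≤ 1) with hA
  set B := univ.filter (fun k => |y j - y k| ≤ 1) with hB
  by_contra hne
  have hmemA : ∀ a : Fin n, a ∈ A ↔ |y i - y a| ≤ 1 := by
    intro a; simp [hA]
  have hmemB : ∀ a : Fin n, a ∈ B ↔ |y j - y a| ≤ 1 := by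
    intro a; simp [hB]
  have hAi : i ∈ A := (hmemA i).mpr (by simp)
  have hBj : j ∈ B := (hmemB j).mpr (by simp)
  -- every element of A \ B is strictly below every element of B
  have hPB : ∀ a ∈ A \ B, ∀ b ∈ B, y a < y b := by
    intro a ha b hb
    rw [Finset.mem_sdiff] at ha
    have h1 : |y i - y a| ≤ 1 := (hmemA a).mp ha.1
    have h2 : ¬ |y j - y a| ≤ 1 := fun h => ha.2 ((hmemB a).mpr h)
    have h3 : |y j - y b| ≤ 1 := (hmemB b).mp hb
    rw [abs_le] at h1 h3
    rw [not_le] at h2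
    rcases lt_abs.mp h2 with h | h
    · linarith
    · linarith
  -- every element of A is strictly below every element of B \ A
  have hAQ : ∀ a ∈ A, ∀ b ∈ B \ A, y a < y b := by
    intro a ha b hb
    rw [Finset.mem_sdiff] at hb
    have h1 : |y i - y a| ≤ 1 := (hmemA a).mp ha
    have h2 : ¬ |y i - y b| ≤ 1 := fun h => hb.2 ((hmemA b).mpr h)
    have h3 : |y j - y b| ≤ 1 := (hmemB b).mp hb.1
    rw [abs_le] at h1 h3
    rw [not_le] at h2
    rcases lt_abs.mp h2 with h | h
    · linarith
    · linarith
  rcases (A ∩ B).eq_empty_or_nonempty with hC | hC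
  · -- disjoint: all of A is in A \ B
    have hAB : ∀ a ∈ A, ∀ b ∈ B, y a < y b := by
      intro a ha b hb
      refine hPB a ?_ b hb
      rw [Finset.mem_sdiff]
      exact ⟨ha, fun h => (Finset.eq_empty_iff_forall_notMem.mp hC a)
        (Finset.mem_inter.mpr ⟨ha, h⟩)⟩
    have := avg_lt_avg y ⟨i, hAi⟩ ⟨j, hBj⟩ hAB
    linarith
  · rcases (A \ B).eq_empty_or_nonempty with hP | hP
    · -- A ⊆ B, so B \ A nonempty
      have hsub : A ⊆ B := Finset.sdiff_eq_empty_iff_subset.mp hP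
      have hQ : (B \ A).Nonempty := by
        rw [Finset.sdiff_nonempty]
        intro hsub2
        exact hne (Finset.Subset.antisymm hsub hsub2)
      have hd : Disjoint A (B \ A) := Finset.disjoint_sdiff
      have key := avg_lt_avg_union y hd ⟨i, hAi⟩ hQ hAQ
      rw [Finset.union_sdiff_of_subset hsub] at key
      linarith
    · -- A \ B nonempty; compare avg A < avg (A ∩ B) ≤ avg B
      have hd1 : Disjoint (A \ B) (A ∩ B) := Finset.disjoint_sdiff_inter A B
      have h1 : ∀ a ∈ A \ B, ∀ b ∈ A ∩ B, y a < y b := by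
        intro a ha b hb
        exact hPB a ha b (Finset.mem_inter.mp hb).2
      have key1 := avg_union_lt_right y hd1 hP hC h1
      rw [Finset.sdiff_union_inter A B] at key1
      rcases (B \ A).eq_empty_or_nonempty with hQ | hQ
      · -- B ⊆ A so A ∩ B = B
        have hsub : B ⊆ A := Finset.sdiff_eq_empty_iff_subset.mp hQ
        rw [Finset.inter_eq_right.mpr hsub] at key1
        linarith
      · have hd2 : Disjoint (A ∩ B) (B \ A) := by
          rw [Finset.inter_comm]
          exact (Finset.disjoint_sdiff_inter B A).symm
        have h2 : ∀ a ∈ A ∩ B, ∀ b ∈ B \ A, y a < y b := by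
          intro a ha b hb
          exact hAQ a (Finset.mem_inter.mp ha).1 b hb
        have key2 := avg_lt_avg_union y hd2 hC hQ h2
        have hU : A ∩ B ∪ B \ A = B := by
          rw [Finset.inter_comm, Finset.union_comm]
          exact Finset.sdiff_union_inter B A
        rw [hU] at key2
        linarith

/-- Equal updated opinions iff equal neighborhoods, in the ordered 1-D HK dynamics. -/
theorem hk_coincidence_iff_equal_neighborhoods {n : ℕ} (x : Fin n → ℕ → ℝ)
    (hupd : ∀ i t, x i (t + 1) =
      (∑ j ∈ univ.filter (fun j => |x i t - x j t| ≤ 1), x j t) /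
        (univ.filter (fun j => |x i t - x j t| ≤ 1)).card)
    (hord : ∀ i j : Fin n, i ≤ j → x i 0 ≤ x j 0)
    (i j : Fin n) (t : ℕ) :
    x i (t + 1) = x j (t + 1) ↔
      univ.filter (fun k => |x i t - x k t| ≤ 1) =
        univ.filter (fun k => |x j t - x k t| ≤ 1) := by
  constructor
  · intro h
    rw [hupd i t, hupd j t] at h
    rcases le_total (x i t) (x j t) with hle | hle
    · exact hk_core (fun k => x k t) i j hle h
    · exact (hk_core (fun k => x k t) j i hle h.symm).symm
  · intro h
    rw [hupd i t, hupd j t, h]
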